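/- arXiv:math/0404051 — 2 statements merged into one kernel-verified Lean document; each statement's English description precedes it below -/
import Mathlib

section
/- Let k be a commutative ring, V a free k-module of finite rank r, φ an arbitrary k-linear endomorphism of the exterior algebra ⋀V, and δ a k-linear superderivation of ⋀V. Then the generalized supertrace satisfies Tr_Λ([δ,φ]_s) = [δ, Tr_Λ(φ)]_s; precisely, i(Tr_Λ([δ,φ]_s)) = [δ, i(Tr_Λ(φ))]_s as k-linear endomorphisms of ⋀V, where i is the canonical embedding of ⋀V^∨ into End_k(⋀V). -/
open ExteriorAlgebra

variable (k : Type*) [CommRing k] (V : Type*) [AddCommGroup V] [Module k V]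

-- the grading involution ε : +1 on even part, −1 on odd part
noncomputable def eps : ExteriorAlgebra k V →ₐ[k] ExteriorAlgebra k V :=
  ExteriorAlgebra.lift k ⟨-(ExteriorAlgebra.ι k (M := V)), fun m => by
    simp [ExteriorAlgebra.ι_sq_zero]⟩

-- the supertrace
noncomputable def strs (φ : Module.End k (ExteriorAlgebra k V)) : k :=
  LinearMap.trace k _ ((eps k V).toLinearMap ∘ₗ φ)

-- projection onto the degree-n graded component
noncomputable def pr (n : ℕ) : ExteriorAlgebra k V →ₗ[k] ⋀[k]^n V :=
  (DirectSum.component k ℕ (fun i => (⋀[k]^i V : Submodule k (ExteriorAlgebra k V))) n) ∘ₗ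
    (DirectSum.decomposeLinearEquiv (fun i : ℕ => (⋀[k]^i V : Submodule k (ExteriorAlgebra k V)))).toLinearMap

noncomputable def prEnd (n : ℕ) : Module.End k (ExteriorAlgebra k V) :=
  (Submodule.subtype _) ∘ₗ pr k V n

-- the degree-d homogeneous component of an endomorphism
noncomputable def cpt (d : ℤ) (φ : Module.End k (ExteriorAlgebra k V)) :
    Module.End k (ExteriorAlgebra k V) :=
  ∑ m ∈ Finset.range (Module.finrank k V + 1),
    if 0 ≤ (m : ℤ) + d then prEnd k V ((m : ℤ) + d).toNat ∘ₗ φ ∘ₗ prEnd k V m else 0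

-- generalized supertrace of a degree-(−n) homogeneous endomorphism
noncomputable def TrHom (n : ℕ) (φ : Module.End k (ExteriorAlgebra k V)) :
    Module.Dual k (⋀[k]^n V) where
  toFun η := (-1 : k) ^ n * strs k V ((LinearMap.mulLeft k (η : ExteriorAlgebra k V)) ∘ₗ φ)
  map_add' x y := by
    have h : ∀ a b : ExteriorAlgebra k V, LinearMap.mulLeft k (a + b) =
        LinearMap.mulLeft k a + LinearMap.mulLeft k b := fun a b => by
      ext z; simp [add_mul]
    simp [h, strs, LinearMap.comp_add, LinearMap.add_comp, mul_add]
  map_smul' c x := by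
    have h : ∀ (c : k) (a : ExteriorAlgebra k V), LinearMap.mulLeft k (c • a) =
        c • LinearMap.mulLeft k a := fun c a => by
      ext z; simp [smul_mul_assoc]
    simp [h, strs, LinearMap.comp_smul, LinearMap.smul_comp]
    ring

-- generalized supertrace of an arbitrary endomorphism, at level n
noncomputable def TrGen (n : ℕ) (φ : Module.End k (ExteriorAlgebra k V)) :
    Module.Dual k (⋀[k]^n V) :=
  TrHom k V n (cpt k V (-(n : ℤ)) φ)

-- the embedding i : ⋀ V^∨ → End(⋀ V)
noncomputable def iEmb (n : ℕ) (α : Module.Dual k (⋀[k]^n V)) :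
    Module.End k (ExteriorAlgebra k V) :=
  (Algebra.linearMap k (ExteriorAlgebra k V)) ∘ₗ α ∘ₗ pr k V n

-- i ∘ Tr_Λ as a single endomorphism, and its even/odd parts
noncomputable def iTr (φ : Module.End k (ExteriorAlgebra k V)) :
    Module.End k (ExteriorAlgebra k V) :=
  ∑ n ∈ Finset.range (Module.finrank k V + 1), iEmb k V n (TrGen k V n φ)

noncomputable def iTrEven (φ : Module.End k (ExteriorAlgebra k V)) :
    Module.End k (ExteriorAlgebra k V) :=
  ∑ n ∈ Finset.range (Module.finrank k V + 1),
    if Even n then iEmb k V n (TrGen k V n φ) else 0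

noncomputable def iTrOdd (φ : Module.End k (ExteriorAlgebra k V)) :
    Module.End k (ExteriorAlgebra k V) :=
  ∑ n ∈ Finset.range (Module.finrank k V + 1),
    if ¬ Even n then iEmb k V n (TrGen k V n φ) else 0

-- parity submodules
noncomputable def evenSub : Submodule k (ExteriorAlgebra k V) :=
  ⨆ n : ℕ, ⋀[k]^(2 * n) V

noncomputable def oddSub : Submodule k (ExteriorAlgebra k V) :=
  ⨆ n : ℕ, ⋀[k]^(2 * n + 1) V

def IsEvenMap (f : Module.End k (ExteriorAlgebra k V)) : Prop :=
  (∀ x ∈ evenSub k V, f x ∈ evenSub k V) ∧ (∀ x ∈ oddSub k V, f x ∈ oddSub k V)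

def IsOddMap (f : Module.End k (ExteriorAlgebra k V)) : Prop :=
  (∀ x ∈ evenSub k V, f x ∈ oddSub k V) ∧ (∀ x ∈ oddSub k V, f x ∈ evenSub k V)

def IsEvenDeriv (δ : Module.End k (ExteriorAlgebra k V)) : Prop :=
  IsEvenMap k V δ ∧ ∀ x y : ExteriorAlgebra k V, δ (x * y) = δ x * y + x * δ y

def IsOddDeriv (δ : Module.End k (ExteriorAlgebra k V)) : Prop :=
  IsOddMap k V δ ∧
  (∀ x ∈ evenSub k V, ∀ y : ExteriorAlgebra k V, δ (x * y) = δ x * y + x * δ y) ∧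
  (∀ x ∈ oddSub k V, ∀ y : ExteriorAlgebra k V, δ (x * y) = δ x * y - x * δ y)

-- supercommutator of parity-decomposed endomorphisms, [a₀+a₁, b₀+b₁]ₛ
def sComm (a₀ a₁ b₀ b₁ : Module.End k (ExteriorAlgebra k V)) :
    Module.End k (ExteriorAlgebra k V) :=
  (a₀ * b₀ - b₀ * a₀) + (a₀ * b₁ - b₁ * a₀) + (a₁ * b₀ - b₀ * a₁) + (a₁ * b₁ + b₁ * a₁)

def IsHomogeneousOfDegree (d : ℤ) (φ : Module.End k (ExteriorAlgebra k V)) : Prop :=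
  ∀ m : ℕ, ∀ x ∈ ⋀[k]^m V,
    (∀ m' : ℕ, (m' : ℤ) = (m : ℤ) + d → φ x ∈ ⋀[k]^m' V) ∧ ((m : ℤ) + d < 0 → φ x = 0)


set_option linter.unusedSectionVars false

section Aux
open DirectSum LinearMap

variable [Module.Free k V] [Module.Finite k V]

local notation "E" => ExteriorAlgebra k V
local notation "RK" => Module.finrank k V
local notation "𝒜" => fun i : ℕ => (⋀[k]^i V : Submodule k (ExteriorAlgebra k V))

lemma prEnd_apply (n : ℕ) (x : E) :
    prEnd k V n x = (DirectSum.decompose 𝒜 x n : E) := rfl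

lemma prEnd_of_mem {n : ℕ} {x : E} (hx : x ∈ ⋀[k]^n V) : prEnd k V n x = x := by
  rw [prEnd_apply]; exact DirectSum.decompose_of_mem_same 𝒜 hx

lemma prEnd_of_mem_ne {m n : ℕ} {x : E} (hx : x ∈ ⋀[k]^n V) (h : m ≠ n) :
    prEnd k V m x = 0 := by
  rw [prEnd_apply, DirectSum.decompose_of_mem_ne 𝒜 hx (Ne.symm h)]

lemma prEnd_mem (n : ℕ) (x : E) : prEnd k V n x ∈ ⋀[k]^n V := by
  rw [prEnd_apply]; exact SetLike.coe_mem _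

lemma exteriorPower_eq_bot {n : ℕ} (hn : Module.finrank k V < n) :
    (⋀[k]^n V : Submodule k E) = ⊥ := by
  classical
  rcases subsingleton_or_nontrivial k with hk | hk
  · have : Subsingleton E := Module.subsingleton k E
    exact Subsingleton.elim _ _
  rw [← ExteriorAlgebra.ιMulti_span_fixedDegree, Submodule.span_eq_bot]
  rintro x ⟨v, rfl⟩
  set b := Module.Free.chooseBasis k V with hb
  have hv : (fun i => v i) = fun i => ∑ j, b.repr (v i) j • b j := by
    funext i; exact (b.sum_repr (v i)).symm
  have h1 : ExteriorAlgebra.ιMulti k n v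
      = (ExteriorAlgebra.ιMulti k n).toMultilinearMap (fun i => ∑ j, b.repr (v i) j • b j) := by
    rw [← hv]; rfl
  rw [h1, MultilinearMap.map_sum]
  refine Finset.sum_eq_zero fun r _ => ?_
  have h2 : (ExteriorAlgebra.ιMulti k n).toMultilinearMap (fun i => b.repr (v i) (r i) • b (r i))
      = (∏ i, b.repr (v i) (r i)) • (ExteriorAlgebra.ιMulti k n) (fun i => b (r i)) :=
    MultilinearMap.map_smul_univ _ _ _
  rw [h2]
  obtain ⟨i, j, hij, hrij⟩ := Fintype.exists_ne_map_eq_of_card_lt r (by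
    rw [Fintype.card_fin, ← Module.finrank_eq_card_chooseBasisIndex]; exact hn)
  rw [AlternatingMap.map_eq_zero_of_eq _ _ (by rw [hrij]) hij, smul_zero]

lemma prEnd_eq_zero_of_gt {n : ℕ} (hn : Module.finrank k V < n) (x : E) :
    prEnd k V n x = 0 := by
  have := prEnd_mem k V n x
  rw [exteriorPower_eq_bot k V hn] at this
  simpa using this

lemma sum_prEnd (x : E) : ∑ n ∈ Finset.range (RK + 1), prEnd k V n x = x := by
  classical
  have hsupp : (DirectSum.decompose 𝒜 x).support ⊆ Finset.range (RK + 1) := by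
    intro i hi
    rw [Finset.mem_range]
    by_contra h
    have h2 : prEnd k V i x = 0 := prEnd_eq_zero_of_gt k V (by omega) x
    rw [prEnd_apply] at h2
    simp only [DFinsupp.mem_support_iff] at hi
    exact hi (by ext; exact h2)
  have hs := Finset.sum_subset (f := fun i => ((DirectSum.decompose 𝒜 x i : E))) hsupp
    (fun i _ hi => by
      rw [DFinsupp.notMem_support_iff] at hi
      simp only [hi, ZeroMemClass.coe_zero])
  calc ∑ n ∈ Finset.range (RK + 1), prEnd k V n x
      = ∑ n ∈ (DirectSum.decompose 𝒜 x).support, (DirectSum.decompose 𝒜 x n : E) := hs.symm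
    _ = x := DirectSum.sum_support_decompose 𝒜 x

end Aux

section Aux2
open DirectSum LinearMap

variable [Module.Free k V] [Module.Finite k V]

local notation "E" => ExteriorAlgebra k V
local notation "RK" => Module.finrank k V

lemma eps_ι (v : V) : eps k V (ExteriorAlgebra.ι k v) = -(ExteriorAlgebra.ι k v) := by
  rw [eps, ExteriorAlgebra.lift_ι_apply]; rfl

lemma eps_of_mem {n : ℕ} {x : ExteriorAlgebra k V} (hx : x ∈ ⋀[k]^n V) :
    eps k V x = ((-1 : k) ^ n) • x := by
  induction hx using Submodule.pow_induction_on_left' with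
  | algebraMap r => simp
  | add x y i hx hy ihx ihy => rw [map_add, ihx, ihy, smul_add]
  | mem_mul m hm i x hx ih =>
      obtain ⟨v, rfl⟩ := hm
      rw [map_mul, eps_ι, ih, mul_smul_comm, neg_mul, pow_succ, mul_comm ((-1:k)^i) (-1),
        mul_smul, neg_smul, one_smul, smul_neg]

lemma exteriorPower_le_evenSub {p : ℕ} (hp : Even p) :
    (⋀[k]^p V : Submodule k E) ≤ evenSub k V := by
  obtain ⟨c, rfl⟩ := hp
  have := le_iSup (fun n : ℕ => (⋀[k]^(2*n) V : Submodule k E)) c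
  rw [two_mul] at this
  rw [evenSub]
  exact this

lemma exteriorPower_le_oddSub {p : ℕ} (hp : ¬ Even p) :
    (⋀[k]^p V : Submodule k E) ≤ oddSub k V := by
  obtain ⟨c, rfl⟩ := Nat.odd_iff.mpr (Nat.not_even_iff.mp hp)
  rw [oddSub]
  exact le_iSup (fun n : ℕ => (⋀[k]^(2*n+1) V : Submodule k E)) c

lemma eps_of_mem_evenSub {x : E} (h : x ∈ evenSub k V) : eps k V x = x := by
  rw [evenSub] at h
  refine Submodule.iSup_induction (motive := fun y => eps k V y = y) _ h (fun i x hx => ?_) (map_zero _) (fun x y hx hy => ?_)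
  · show eps k V x = x
    rw [eps_of_mem k V hx, Even.neg_one_pow (even_two_mul i), one_smul]
  · show eps k V _ = _
    rw [map_add, hx, hy]

lemma eps_of_mem_oddSub {x : E} (h : x ∈ oddSub k V) : eps k V x = -x := by
  rw [oddSub] at h
  refine Submodule.iSup_induction (motive := fun y => eps k V y = -y) _ h (fun i x hx => ?_) (by simp) (fun x y hx hy => ?_)
  · show eps k V x = -x
    rw [eps_of_mem k V hx, Odd.neg_one_pow ⟨i, by ring⟩, neg_one_smul]
  · show eps k V _ = _
    rw [map_add, hx, hy, neg_add]

lemma prEnd_of_mem_evenSub {n : ℕ} {x : E} (h : x ∈ evenSub k V) (hn : ¬ Even n) :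
    prEnd k V n x = 0 := by
  rw [evenSub] at h
  refine Submodule.iSup_induction (motive := fun y => prEnd k V n y = 0) _ h (fun i x hx => ?_) (map_zero _) (fun x y hx hy => ?_)
  · exact prEnd_of_mem_ne k V hx (by rintro rfl; exact hn (even_two_mul i))
  · show prEnd k V n _ = 0
    rw [map_add, hx, hy, add_zero]

lemma prEnd_of_mem_oddSub {n : ℕ} {x : E} (h : x ∈ oddSub k V) (hn : Even n) :
    prEnd k V n x = 0 := by
  rw [oddSub] at h
  refine Submodule.iSup_induction (motive := fun y => prEnd k V n y = 0) _ h (fun i x hx => ?_) (map_zero _) (fun x y hx hy => ?_)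
  · refine prEnd_of_mem_ne k V hx (by rintro rfl; exact (Nat.even_add_one.mp hn) (even_two_mul i))
  · show prEnd k V n _ = 0
    rw [map_add, hx, hy, add_zero]

lemma one_mem_zeroth : (1 : E) ∈ (⋀[k]^0 V : Submodule k E) := by
  have h0 : (⋀[k]^0 V : Submodule k E) = 1 := pow_zero _
  exact Submodule.one_le.mp h0.ge

lemma one_mem_evenSub : (1 : E) ∈ evenSub k V :=
  exteriorPower_le_evenSub k V (Even.zero) (one_mem_zeroth k V)

end Aux2

section Aux3
open DirectSum LinearMap

variable [Module.Free k V] [Module.Finite k V]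

local notation "E" => ExteriorAlgebra k V
local notation "RK" => Module.finrank k V
local notation "ee" => AlgHom.toLinearMap (eps k V)
local notation "P" => prEnd k V
local notation "T" => LinearMap.trace k (ExteriorAlgebra k V)
local notation "L" => LinearMap.mulLeft k

lemma prEnd_mul_prEnd (i j : ℕ) :
    P i * P j = if i = j then P j else (0 : Module.End k E) := by
  refine LinearMap.ext fun x => ?_
  by_cases h : i = j
  · subst h
    simp only [if_pos rfl, Module.End.mul_apply]
    exact prEnd_of_mem k V (prEnd_mem k V i x)
  · simp only [if_neg h, Module.End.mul_apply, LinearMap.zero_apply]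
    exact prEnd_of_mem_ne k V (prEnd_mem k V j x) h

lemma prEnd_mul_prEnd_self (i : ℕ) : P i * P i = (P i : Module.End k E) := by
  rw [prEnd_mul_prEnd, if_pos rfl]

lemma prEnd_mul_mulLeft {p : ℕ} {x : E} (hx : x ∈ ⋀[k]^p V) (n i : ℕ) :
    P n * L x * P i = if n = p + i then L x * P i else (0 : Module.End k E) := by
  refine LinearMap.ext fun y => ?_
  have hm : x * prEnd k V i y ∈ ⋀[k]^(p+i) V :=
    SetLike.mul_mem_graded hx (prEnd_mem k V i y)
  by_cases h : n = p + i
  · subst h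
    simp only [if_pos rfl, Module.End.mul_apply, LinearMap.mulLeft_apply]
    exact prEnd_of_mem k V hm
  · simp only [if_neg h, Module.End.mul_apply, LinearMap.mulLeft_apply, LinearMap.zero_apply]
    exact prEnd_of_mem_ne k V hm h

lemma eps_mul_prEnd (n : ℕ) : ee * P n = ((-1:k)^n) • (P n : Module.End k E) := by
  refine LinearMap.ext fun x => ?_
  simp only [Module.End.mul_apply, LinearMap.smul_apply, AlgHom.toLinearMap_apply]
  exact eps_of_mem k V (prEnd_mem k V n x)

lemma prEnd_mul_eps (n : ℕ) : P n * ee = ((-1:k)^n) • (P n : Module.End k E) := by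
  refine LinearMap.ext fun x => ?_
  simp only [Module.End.mul_apply, LinearMap.smul_apply, AlgHom.toLinearMap_apply]
  have h1 : eps k V x = ∑ m ∈ Finset.range (RK + 1), ((-1:k)^m) • prEnd k V m x := by
    conv_lhs => rw [← sum_prEnd k V x]
    rw [map_sum]
    exact Finset.sum_congr rfl fun m _ => eps_of_mem k V (prEnd_mem k V m x)
  rw [h1, map_sum]
  simp only [map_smul]
  by_cases hn : n ∈ Finset.range (RK + 1)
  · rw [Finset.sum_eq_single n]
    · rw [prEnd_of_mem k V (prEnd_mem k V n x)]
    · intro m _ hm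
      rw [prEnd_of_mem_ne k V (prEnd_mem k V m x) (Ne.symm hm), smul_zero]
    · intro h; exact absurd hn h
  · rw [Finset.mem_range] at hn
    rw [prEnd_eq_zero_of_gt k V (by omega) x, smul_zero]
    refine Finset.sum_eq_zero fun m hm => ?_
    rw [Finset.mem_range] at hm
    rw [prEnd_of_mem_ne k V (prEnd_mem k V m x) (by omega), smul_zero]

lemma sum_prEnd_eq_one :
    ∑ n ∈ Finset.range (RK + 1), P n = (1 : Module.End k E) := by
  refine LinearMap.ext fun x => ?_
  rw [LinearMap.coe_sum, Finset.sum_apply]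
  rw [sum_prEnd k V x]
  rfl

lemma sum_prEnd_sq_eq_one :
    ∑ n ∈ Finset.range (RK + 1), P n * P n = (1 : Module.End k E) := by
  rw [← sum_prEnd_eq_one k V]
  exact Finset.sum_congr rfl fun n _ => prEnd_mul_prEnd_self k V n

lemma trace_eps_expand (f : Module.End k E) :
    T (ee * f) = ∑ n ∈ Finset.range (RK + 1), T (ee * (P n * f * P n)) := by
  have h1 : ee * f = ∑ n ∈ Finset.range (RK + 1), ee * f * P n := by
    rw [← Finset.mul_sum, sum_prEnd_eq_one k V, mul_one]
  rw [h1, map_sum]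
  refine Finset.sum_congr rfl fun n _ => ?_
  calc T (ee * f * P n) = T (ee * f * (P n * P n)) := by rw [prEnd_mul_prEnd_self]
    _ = T ((ee * f * P n) * P n) := by simp only [mul_assoc]
    _ = T (P n * (ee * f * P n)) := LinearMap.trace_mul_comm k _ _
    _ = T ((P n * ee) * f * P n) := by simp only [mul_assoc]
    _ = T ((ee * P n) * f * P n) := by rw [prEnd_mul_eps, ← eps_mul_prEnd]
    _ = T (ee * (P n * f * P n)) := by simp only [mul_assoc]

lemma trace_eps_zero {f : Module.End k E} (h : ∀ n, P n * f * P n = 0) :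
    T (ee * f) = 0 := by
  rw [trace_eps_expand k V f]
  refine Finset.sum_eq_zero fun n _ => ?_
  rw [h n, mul_zero, map_zero]

/-- parity of an endomorphism, in block form -/
def Par (e : ℕ) (f : Module.End k E) : Prop :=
  ∀ i j, ¬ Even (i + j + e) → P i * f * P j = (0 : Module.End k E)

lemma isEvenMap_par {f : Module.End k E} (hf : IsEvenMap k V f) : Par k V 0 f := by
  intro i j hij
  refine LinearMap.ext fun x => ?_
  simp only [Module.End.mul_apply, LinearMap.zero_apply]
  by_cases hj : Even j
  · have hfx : f (prEnd k V j x) ∈ evenSub k V :=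
      hf.1 _ (exteriorPower_le_evenSub k V hj (prEnd_mem k V j x))
    exact prEnd_of_mem_evenSub k V hfx (by rw [Nat.even_iff] at *; omega)
  · have hfx : f (prEnd k V j x) ∈ oddSub k V :=
      hf.2 _ (exteriorPower_le_oddSub k V hj (prEnd_mem k V j x))
    exact prEnd_of_mem_oddSub k V hfx (by rw [Nat.even_iff] at *; omega)

lemma isOddMap_par {f : Module.End k E} (hf : IsOddMap k V f) : Par k V 1 f := by
  intro i j hij
  refine LinearMap.ext fun x => ?_
  simp only [Module.End.mul_apply, LinearMap.zero_apply]
  by_cases hj : Even j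
  · have hfx : f (prEnd k V j x) ∈ oddSub k V :=
      hf.1 _ (exteriorPower_le_evenSub k V hj (prEnd_mem k V j x))
    exact prEnd_of_mem_oddSub k V hfx (by rw [Nat.even_iff] at *; omega)
  · have hfx : f (prEnd k V j x) ∈ evenSub k V :=
      hf.2 _ (exteriorPower_le_oddSub k V hj (prEnd_mem k V j x))
    exact prEnd_of_mem_evenSub k V hfx (by rw [Nat.even_iff] at *; omega)

lemma par_prEnd_apply_eq_zero {e : ℕ} {f : Module.End k E} (hf : Par k V e f)
    {p : ℕ} {x : E} (hx : x ∈ ⋀[k]^p V) {n : ℕ} (hn : ¬ Even (n + p + e)) :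
    prEnd k V n (f x) = 0 := by
  have := congrArg (fun g : Module.End k E => g x) (hf n p hn)
  simp only [Module.End.mul_apply, LinearMap.zero_apply] at this
  rwa [prEnd_of_mem k V hx] at this

end Aux3

section Aux4
open DirectSum LinearMap

variable [Module.Free k V] [Module.Finite k V]

local notation "E" => ExteriorAlgebra k V
local notation "RK" => Module.finrank k V
local notation "ee" => AlgHom.toLinearMap (eps k V)
local notation "P" => prEnd k V
local notation "T" => LinearMap.trace k (ExteriorAlgebra k V)
local notation "L" => LinearMap.mulLeft k

lemma end_ext {f g : Module.End k E} (h : ∀ p : ℕ, ∀ x ∈ ⋀[k]^p V, f x = g x) : f = g := by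
  refine LinearMap.ext fun x => ?_
  conv_lhs => rw [← sum_prEnd k V x]
  conv_rhs => rw [← sum_prEnd k V x]
  rw [map_sum, map_sum]
  exact Finset.sum_congr rfl fun n _ => h n _ (prEnd_mem k V n x)

lemma eps_comm_evenMap {f : Module.End k E} (hf : IsEvenMap k V f) :
    ee * f = f * ee := by
  refine end_ext k V fun p x hx => ?_
  simp only [Module.End.mul_apply, AlgHom.toLinearMap_apply]
  rw [eps_of_mem k V hx, map_smul]
  by_cases hp : Even p
  · rw [eps_of_mem_evenSub k V (hf.1 x (exteriorPower_le_evenSub k V hp hx)),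
      Even.neg_one_pow hp, one_smul]
  · rw [eps_of_mem_oddSub k V (hf.2 x (exteriorPower_le_oddSub k V hp hx)),
      Odd.neg_one_pow (Nat.odd_iff.mpr (Nat.not_even_iff.mp hp)), neg_one_smul]

lemma eps_comm_oddMap {f : Module.End k E} (hf : IsOddMap k V f) :
    ee * f = (-1 : k) • (f * ee) := by
  refine end_ext k V fun p x hx => ?_
  simp only [Module.End.mul_apply, AlgHom.toLinearMap_apply, LinearMap.smul_apply]
  rw [eps_of_mem k V hx, map_smul]
  by_cases hp : Even p
  · rw [eps_of_mem_oddSub k V (hf.1 x (exteriorPower_le_evenSub k V hp hx)),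
      Even.neg_one_pow hp]
    simp
  · rw [eps_of_mem_evenSub k V (hf.2 x (exteriorPower_le_oddSub k V hp hx)),
      Odd.neg_one_pow (Nat.odd_iff.mpr (Nat.not_even_iff.mp hp))]
    simp

lemma evenDeriv_mulLeft {δ : Module.End k E} (hδ : IsEvenDeriv k V δ) (x : E) :
    δ * L x = (1:k) • (L x * δ) + L (δ x) := by
  refine LinearMap.ext fun y => ?_
  simp only [LinearMap.add_apply, Module.End.mul_apply, LinearMap.mulLeft_apply,
    LinearMap.smul_apply, one_smul]
  rw [hδ.2 x y, add_comm]

lemma oddDeriv_mulLeft {δ : Module.End k E} (hδ : IsOddDeriv k V δ) {p : ℕ} {x : E}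
    (hx : x ∈ ⋀[k]^p V) :
    δ * L x = ((-1:k)^p) • (L x * δ) + L (δ x) := by
  refine LinearMap.ext fun y => ?_
  simp only [LinearMap.add_apply, Module.End.mul_apply, LinearMap.mulLeft_apply,
    LinearMap.smul_apply]
  by_cases hp : Even p
  · rw [hδ.2.1 x (exteriorPower_le_evenSub k V hp hx) y, Even.neg_one_pow hp, one_smul, add_comm]
  · rw [hδ.2.2 x (exteriorPower_le_oddSub k V hp hx) y,
      Odd.neg_one_pow (Nat.odd_iff.mpr (Nat.not_even_iff.mp hp)), neg_one_smul, sub_eq_neg_add]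

lemma evenDeriv_algebraMap {δ : Module.End k E} (hδ : IsEvenDeriv k V δ) (c : k) :
    δ (algebraMap k E c) = 0 := by
  have h1 : δ (1 : E) = 0 := by
    have := hδ.2 1 1
    rw [one_mul, mul_one, one_mul] at this
    exact (left_eq_add.mp this)
  rw [Algebra.algebraMap_eq_smul_one, map_smul, h1, smul_zero]

lemma oddDeriv_algebraMap {δ : Module.End k E} (hδ : IsOddDeriv k V δ) (c : k) :
    δ (algebraMap k E c) = 0 := by
  have h1 : δ (1 : E) = 0 := by
    have := hδ.2.1 1 (one_mem_evenSub k V) 1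
    rw [one_mul, mul_one, one_mul] at this
    exact (left_eq_add.mp this)
  rw [Algebra.algebraMap_eq_smul_one, map_smul, h1, smul_zero]

lemma sum_proj_proj (g : Module.End k E) :
    ∑ m ∈ Finset.range (RK + 1), P m * (P m * g) = g := by
  calc ∑ m ∈ Finset.range (RK + 1), P m * (P m * g)
      = (∑ m ∈ Finset.range (RK + 1), P m * P m) * g := by
        rw [Finset.sum_mul]; simp only [mul_assoc]
    _ = g := by rw [sum_prEnd_sq_eq_one k V, one_mul]

lemma trace_block_zero {p : ℕ} {x : E} (hx : x ∈ ⋀[k]^p V) {i m : ℕ} (g : Module.End k E)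
    (h : m ≠ p + i) : T (ee * (L x * (P i * (g * P m)))) = 0 := by
  have e1 : ee * (L x * (P i * (g * P m))) = (ee * (L x * (P i * g))) * P m := by
    simp only [mul_assoc]
  rw [e1, LinearMap.trace_mul_comm]
  have e2 : P m * (ee * (L x * (P i * g))) = ((P m * ee) * L x * P i) * g := by
    simp only [mul_assoc]
  rw [e2, prEnd_mul_eps, smul_mul_assoc, smul_mul_assoc, smul_mul_assoc,
    prEnd_mul_mulLeft k V hx, if_neg h, zero_mul, smul_zero, map_zero]

lemma trace_eps_L_par_zero {a b p : ℕ} {φ δ : Module.End k E} (hφ : Par k V a φ)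
    (hδ : Par k V b δ) {x : E} (hx : x ∈ ⋀[k]^p V) (hp : ¬ Even (p + a + b)) :
    T (ee * (L x * φ * δ)) = 0 := by
  have e0 : ee * (L x * φ * δ) = ee * (L x * (φ * δ)) := by simp only [mul_assoc]
  rw [e0]
  refine trace_eps_zero k V (fun n => ?_)
  have key : ∀ i j, (P n * L x * P i) * ((P i * φ * P j) * (P j * δ * P n)) = 0 := by
    intro i j
    by_cases h1 : Even (i + j + a)
    · by_cases h2 : Even (j + n + b)
      · by_cases h3 : n = p + i
        · exfalso; rw [Nat.even_iff] at h1 h2 hp; omega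
        · rw [prEnd_mul_mulLeft k V hx n i, if_neg h3, zero_mul]
      · rw [hδ j n h2, mul_zero, mul_zero]
    · rw [hφ i j h1, zero_mul, mul_zero]
  have expand : P n * (L x * (φ * δ)) * P n
      = ∑ i ∈ Finset.range (RK + 1), ∑ j ∈ Finset.range (RK + 1),
        P n * (L x * (P i * (P i * (φ * (P j * (P j * (δ * P n))))))) := by
    rw [eq_comm]
    simp only [← Finset.mul_sum]
    rw [sum_proj_proj k V (δ * P n)]
    rw [sum_proj_proj k V (φ * (δ * P n))]
    simp only [mul_assoc]
  rw [expand]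
  refine Finset.sum_eq_zero fun i _ => Finset.sum_eq_zero fun j _ => ?_
  have := key i j
  simp only [mul_assoc] at this ⊢
  exact this

end Aux4

section Aux5
open DirectSum LinearMap

variable [Module.Free k V] [Module.Finite k V]

local notation "E" => ExteriorAlgebra k V
local notation "RK" => Module.finrank k V
local notation "ee" => AlgHom.toLinearMap (eps k V)
local notation "P" => prEnd k V
local notation "T" => LinearMap.trace k (ExteriorAlgebra k V)
local notation "L" => LinearMap.mulLeft k

lemma trace_block_zero' {p : ℕ} {x : E} (hx : x ∈ ⋀[k]^p V) {i m : ℕ} (g : Module.End k E)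
    (h : m ≠ p + i) : T (ee * (L x * (P i * (P i * (g * P m))))) = 0 := by
  have e : P i * (P i * (g * P m)) = P i * ((P i * g) * P m) := by simp only [mul_assoc]
  rw [e]
  exact trace_block_zero k V hx _ h

lemma TrGen_eval {p : ℕ} (ψ : Module.End k E) (ξ : ⋀[k]^p V) :
    TrGen k V p ψ ξ = (-1:k)^p * T (ee * (L (ξ : E) * ψ)) := by
  have hξ : (ξ : E) ∈ ⋀[k]^p V := ξ.2
  have h0 : TrGen k V p ψ ξ
      = (-1:k)^p * T (ee * (L (ξ : E) * cpt k V (-(p:ℤ)) ψ)) := rfl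
  rw [h0]
  congr 1
  rw [cpt]
  simp only [← Module.End.mul_eq_comp]
  simp only [Finset.mul_sum, map_sum]
  have hRHS : T (ee * (L (ξ : E) * ψ))
      = ∑ m ∈ Finset.range (RK + 1), T (ee * (L (ξ : E) * (ψ * P m))) := by
    have h1 : L (ξ : E) * ψ = ∑ m ∈ Finset.range (RK + 1), L (ξ : E) * (ψ * P m) := by
      rw [← Finset.mul_sum, ← Finset.mul_sum, sum_prEnd_eq_one k V, mul_one]
    rw [h1, Finset.mul_sum, map_sum]
  rw [hRHS]
  refine Finset.sum_congr rfl fun m hm => ?_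
  rw [Finset.mem_range] at hm
  have h2 : T (ee * (L (ξ : E) * (ψ * P m)))
      = ∑ i ∈ Finset.range (RK + 1), T (ee * (L (ξ : E) * (P i * (P i * (ψ * P m))))) := by
    conv_lhs => rw [← sum_proj_proj k V (ψ * P m)]
    rw [Finset.mul_sum, Finset.mul_sum, map_sum]
  by_cases hp : (p : ℤ) ≤ (m : ℤ)
  · have hpm : p ≤ m := by exact_mod_cast hp
    rw [if_pos (by omega)]
    have htoNat : ((m : ℤ) + -(p:ℤ)).toNat = m - p := by omega
    rw [htoNat]
    have hdup : P (m-p) * (P (m-p) * (ψ * P m)) = P (m-p) * (ψ * P m) := by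
      rw [← mul_assoc, prEnd_mul_prEnd_self]
    have hsingle : ∑ i ∈ Finset.range (RK + 1),
          T (ee * (L (ξ : E) * (P i * (P i * (ψ * P m)))))
        = T (ee * (L (ξ : E) * (P (m-p) * (P (m-p) * (ψ * P m))))) :=
      Finset.sum_eq_single_of_mem (m - p) (Finset.mem_range.mpr (by omega))
        (fun i _ hi => trace_block_zero' k V hξ ψ (by omega))
    rw [h2, hsingle, hdup]
  · rw [if_neg (by omega), mul_zero, mul_zero, map_zero, h2]
    refine (Finset.sum_eq_zero fun i _ => trace_block_zero' k V hξ ψ (by omega)).symm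

lemma core_identity {δ φ : Module.End k E} {x : E} {p : ℕ} (hx : x ∈ ⋀[k]^p V)
    (u w t : k) (hu : u * u = 1)
    (hder : δ * L x = u • (L x * δ) + L (δ x))
    (heps : ee * δ = w • (δ * ee))
    (hvanish : (u * w - t) * T (ee * (L x * φ * δ)) = 0) :
    T (ee * (L x * (δ * φ - t • (φ * δ)))) = - (u * T (ee * (L (δ x) * φ))) := by
  have h1 : L x * δ = u • (δ * L x) - u • L (δ x) := by
    rw [hder, smul_add, smul_smul, hu, one_smul, add_sub_cancel_right]
  have e1 : L x * (δ * φ) = u • (δ * (L x * φ)) - u • (L (δ x) * φ) := by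
    calc L x * (δ * φ) = (L x * δ) * φ := by rw [mul_assoc]
      _ = (u • (δ * L x) - u • L (δ x)) * φ := by rw [h1]
      _ = u • (δ * (L x * φ)) - u • (L (δ x) * φ) := by
          rw [sub_mul, smul_mul_assoc, smul_mul_assoc, mul_assoc]
  have e2 : T (ee * (δ * (L x * φ))) = w * T (ee * (L x * φ * δ)) := by
    calc T (ee * (δ * (L x * φ))) = T ((ee * δ) * (L x * φ)) := by rw [mul_assoc]
      _ = T ((w • (δ * ee)) * (L x * φ)) := by rw [heps]
      _ = w * T (δ * (ee * (L x * φ))) := by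
          rw [smul_mul_assoc, map_smul, mul_assoc, smul_eq_mul]
      _ = w * T ((ee * (L x * φ)) * δ) := by rw [LinearMap.trace_mul_comm]
      _ = w * T (ee * (L x * φ * δ)) := by simp only [mul_assoc]
  calc T (ee * (L x * (δ * φ - t • (φ * δ))))
      = T (ee * (L x * (δ * φ))) - t * T (ee * (L x * (φ * δ))) := by
        simp only [mul_sub, mul_smul_comm, map_sub, map_smul, smul_eq_mul]
    _ = u * (w * T (ee * (L x * φ * δ))) - u * T (ee * (L (δ x) * φ))
          - t * T (ee * (L x * (φ * δ))) := by
        rw [e1]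
        simp only [mul_sub, mul_smul_comm, map_sub, map_smul, smul_eq_mul]
        rw [e2]
    _ = (u * w - t) * T (ee * (L x * φ * δ)) - u * T (ee * (L (δ x) * φ)) := by
        have e4 : T (ee * (L x * (φ * δ))) = T (ee * (L x * φ * δ)) := by simp only [mul_assoc]
        rw [e4]; ring
    _ = - (u * T (ee * (L (δ x) * φ))) := by rw [hvanish, zero_sub]

end Aux5

section Aux6
open DirectSum LinearMap

variable [Module.Free k V] [Module.Finite k V]

local notation "E" => ExteriorAlgebra k V
local notation "RK" => Module.finrank k V
local notation "ee" => AlgHom.toLinearMap (eps k V)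
local notation "P" => prEnd k V
local notation "T" => LinearMap.trace k (ExteriorAlgebra k V)
local notation "L" => LinearMap.mulLeft k

lemma neg_one_pow_congr' {n p : ℕ} (h : Even (n + p)) : ((-1:k)^p) = (-1:k)^n := by
  have h' := Nat.even_add.mp h
  by_cases hn : Even n
  · rw [Even.neg_one_pow hn, Even.neg_one_pow (h'.mp hn)]
  · rw [Odd.neg_one_pow (Nat.odd_iff.mpr (Nat.not_even_iff.mp hn)),
      Odd.neg_one_pow (Nat.odd_iff.mpr (Nat.not_even_iff.mp (fun hp => hn (h'.mpr hp))))]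

lemma trace_L_expand (y : E) (φ : Module.End k E) :
    T (ee * (L y * φ)) = ∑ n ∈ Finset.range (RK + 1), T (ee * (L (prEnd k V n y) * φ)) := by
  conv_lhs => rw [← sum_prEnd k V y]
  have h1 : L (∑ n ∈ Finset.range (RK + 1), prEnd k V n y)
      = ∑ n ∈ Finset.range (RK + 1), L (prEnd k V n y) := by
    refine LinearMap.ext fun z => ?_
    simp [Finset.sum_mul]
  rw [h1, Finset.sum_mul, Finset.mul_sum, map_sum]

lemma neg_one_sq_pow (p : ℕ) : ((-1:k)^p) * ((-1:k)^p) = 1 := by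
  rw [← pow_add, Even.neg_one_pow ⟨p, rfl⟩]

lemma key_even {δ φ : Module.End k E} (hδ : IsEvenDeriv k V δ) {p : ℕ} {x : E}
    (hx : x ∈ ⋀[k]^p V) :
    (-1:k)^p * T (ee * (L x * (δ * φ - (1:k) • (φ * δ))))
    = ∑ n ∈ Finset.range (RK + 1), -((-1:k)^n * T (ee * (L (prEnd k V n (δ x)) * φ))) := by
  have hcore := core_identity k V (φ := φ) hx 1 1 1 (one_mul 1)
    (evenDeriv_mulLeft k V hδ x)
    (by rw [one_smul]; exact eps_comm_evenMap k V hδ.1)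
    (by rw [one_mul, sub_self, zero_mul])
  rw [hcore, one_mul, trace_L_expand k V (δ x) φ, Finset.sum_neg_distrib, mul_neg,
    Finset.mul_sum]
  rw [neg_inj]
  refine Finset.sum_congr rfl fun n _ => ?_
  by_cases hev : Even (n + p)
  · rw [neg_one_pow_congr' k hev]
  · have h0 : prEnd k V n (δ x) = 0 :=
      par_prEnd_apply_eq_zero k V (isEvenMap_par k V hδ.1) hx
        (by rw [Nat.even_iff] at *; omega)
    rw [h0, LinearMap.mulLeft_zero_eq_zero, zero_mul, mul_zero, map_zero, mul_zero, mul_zero]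

lemma key_odd {δ φ : Module.End k E} (hδ : IsOddDeriv k V δ) {a : ℕ} (hφ : Par k V a φ)
    {t : k} (hta : (Even a ∧ t = 1) ∨ (¬ Even a ∧ t = -1)) {p : ℕ} {x : E}
    (hx : x ∈ ⋀[k]^p V) :
    (-1:k)^p * T (ee * (L x * (δ * φ - t • (φ * δ))))
    = ∑ n ∈ Finset.range (RK + 1), -(T (ee * (L (prEnd k V n (δ x)) * φ))) := by
  have hδpar := isOddMap_par k V hδ.1
  have hvanish : (((-1:k)^p) * (-1) - t) * T (ee * (L x * φ * δ)) = 0 := by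
    by_cases hp2 : Even (p + a + 1)
    · have hcoef : (((-1:k)^p) * (-1) - t) = 0 := by
        rcases hta with ⟨ha, rfl⟩ | ⟨ha, rfl⟩
        · have hodd : ¬ Even p := by rw [Nat.even_iff] at *; omega
          rw [Odd.neg_one_pow (Nat.odd_iff.mpr (Nat.not_even_iff.mp hodd))]; ring
        · have hev : Even p := by rw [Nat.even_iff] at *; omega
          rw [Even.neg_one_pow hev]; ring
      rw [hcoef, zero_mul]
    · rw [trace_eps_L_par_zero k V hφ hδpar hx hp2, mul_zero]
  have hcore := core_identity k V (φ := φ) hx ((-1:k)^p) (-1) t (neg_one_sq_pow k p)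
    (oddDeriv_mulLeft k V hδ hx) (eps_comm_oddMap k V hδ.1) hvanish
  rw [hcore, trace_L_expand k V (δ x) φ, Finset.sum_neg_distrib, mul_neg, ← mul_assoc,
    neg_one_sq_pow k p, one_mul]

end Aux6

section Aux7
open DirectSum LinearMap

variable [Module.Free k V] [Module.Finite k V]

local notation "E" => ExteriorAlgebra k V
local notation "RK" => Module.finrank k V
local notation "ee" => AlgHom.toLinearMap (eps k V)
local notation "P" => prEnd k V
local notation "T" => LinearMap.trace k (ExteriorAlgebra k V)
local notation "L" => LinearMap.mulLeft k

lemma pr_coe (n : ℕ) (y : E) : ((pr k V n y : E)) = prEnd k V n y := rfl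

lemma iEmb_apply (n : ℕ) (α : Module.Dual k (⋀[k]^n V)) (y : E) :
    iEmb k V n α y = algebraMap k E (α (pr k V n y)) := rfl

lemma deriv_mul_iEmb {δ : Module.End k E} (hδ0 : ∀ c, δ (algebraMap k E c) = 0)
    (n : ℕ) (α : Module.Dual k (⋀[k]^n V)) : δ * iEmb k V n α = 0 :=
  LinearMap.ext fun y => by
    rw [Module.End.mul_apply, iEmb_apply, hδ0]; rfl

lemma deriv_mul_iTrEven {δ : Module.End k E} (hδ0 : ∀ c, δ (algebraMap k E c) = 0)
    (φ : Module.End k E) : δ * iTrEven k V φ = 0 := by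
  rw [iTrEven, Finset.mul_sum]
  refine Finset.sum_eq_zero fun n _ => ?_
  by_cases h : Even n
  · rw [if_pos h, deriv_mul_iEmb k V hδ0]
  · rw [if_neg h, mul_zero]

lemma deriv_mul_iTrOdd {δ : Module.End k E} (hδ0 : ∀ c, δ (algebraMap k E c) = 0)
    (φ : Module.End k E) : δ * iTrOdd k V φ = 0 := by
  rw [iTrOdd, Finset.mul_sum]
  refine Finset.sum_eq_zero fun n _ => ?_
  by_cases h : ¬ Even n
  · rw [if_pos h, deriv_mul_iEmb k V hδ0]
  · rw [if_neg h, mul_zero]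

lemma iTrEven_apply (φ : Module.End k E) (y : E) :
    iTrEven k V φ y = algebraMap k E (∑ n ∈ Finset.range (RK + 1),
      if Even n then (-1:k)^n * T (ee * (L (prEnd k V n y) * φ)) else 0) := by
  rw [iTrEven, LinearMap.coe_sum, Finset.sum_apply, map_sum]
  refine Finset.sum_congr rfl fun n _ => ?_
  by_cases h : Even n
  · rw [if_pos h, if_pos h, iEmb_apply, TrGen_eval k V φ (pr k V n y), pr_coe]
  · rw [if_neg h, if_neg h, map_zero, LinearMap.zero_apply]

lemma iTrOdd_apply (φ : Module.End k E) (y : E) :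
    iTrOdd k V φ y = algebraMap k E (∑ n ∈ Finset.range (RK + 1),
      if ¬ Even n then (-1:k)^n * T (ee * (L (prEnd k V n y) * φ)) else 0) := by
  rw [iTrOdd, LinearMap.coe_sum, Finset.sum_apply, map_sum]
  refine Finset.sum_congr rfl fun n _ => ?_
  by_cases h : ¬ Even n
  · rw [if_pos h, if_pos h, iEmb_apply, TrGen_eval k V φ (pr k V n y), pr_coe]
  · rw [if_neg h, if_neg h, map_zero, LinearMap.zero_apply]

lemma pr_eq_zero_of_ne {p n : ℕ} {x : E} (hx : x ∈ ⋀[k]^p V) (h : n ≠ p) :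
    pr k V n x = 0 :=
  Subtype.ext (prEnd_of_mem_ne k V hx h)

lemma iTr_apply_of_mem {p : ℕ} (hp : p ≤ RK) {x : E} (hx : x ∈ ⋀[k]^p V)
    (Ψ : Module.End k E) :
    iTr k V Ψ x = algebraMap k E ((-1:k)^p * T (ee * (L x * Ψ))) := by
  rw [iTr, LinearMap.coe_sum, Finset.sum_apply]
  rw [Finset.sum_eq_single_of_mem p (Finset.mem_range.mpr (by omega))]
  · rw [iEmb_apply, TrGen_eval k V Ψ (pr k V p x),
      show ((pr k V p x : E)) = x from prEnd_of_mem k V hx]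
  · intro n _ hn
    rw [iEmb_apply, pr_eq_zero_of_ne k V hx hn, map_zero, map_zero]

end Aux7

/-- For a free `k`-module `V` of finite rank `r`, an arbitrary `k`-linear
endomorphism `φ = φ₀ + φ₁` of `⋀ V` (decomposed into its even and odd parts) and a `k`-linear
superderivation `δ = δ₀ + δ₁` of `⋀ V`, the generalized supertrace satisfies
`Tr_Λ([δ,φ]ₛ) = [δ, Tr_Λ(φ)]ₛ`; precisely, `i (Tr_Λ ([δ,φ]ₛ)) = [δ, i (Tr_Λ φ)]ₛ` as
`k`-linear endomorphisms of `⋀ V`, where `i` is the canonical embedding of `⋀ V^∨` into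
`End_k (⋀ V)`. -/
theorem generalized_supertrace_of_supercommutator
    [Module.Free k V] [Module.Finite k V] (r : ℕ) (hr : Module.finrank k V = r)
    (δ₀ δ₁ φ₀ φ₁ : Module.End k (ExteriorAlgebra k V))
    (hδ₀ : IsEvenDeriv k V δ₀) (hδ₁ : IsOddDeriv k V δ₁)
    (hφ₀ : IsEvenMap k V φ₀) (hφ₁ : IsOddMap k V φ₁) :
    iTr k V (sComm k V δ₀ δ₁ φ₀ φ₁) =
      sComm k V δ₀ δ₁ (iTrEven k V (φ₀ + φ₁)) (iTrOdd k V (φ₀ + φ₁)) := by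
  classical
  set Φ := φ₀ + φ₁ with hΦ
  have hφ0p : Par k V 0 φ₀ := isEvenMap_par k V hφ₀
  have hφ1p : Par k V 1 φ₁ := isOddMap_par k V hφ₁
  have hδ₀0 : ∀ c, δ₀ (algebraMap k (ExteriorAlgebra k V) c) = 0 :=
    evenDeriv_algebraMap k V hδ₀
  have hδ₁0 : ∀ c, δ₁ (algebraMap k (ExteriorAlgebra k V) c) = 0 :=
    oddDeriv_algebraMap k V hδ₁
  have hRHSop : sComm k V δ₀ δ₁ (iTrEven k V Φ) (iTrOdd k V Φ)
      = -(iTrEven k V Φ * δ₀) + -(iTrOdd k V Φ * δ₀) + -(iTrEven k V Φ * δ₁)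
        + iTrOdd k V Φ * δ₁ := by
    rw [sComm, deriv_mul_iTrEven k V hδ₀0, deriv_mul_iTrOdd k V hδ₀0,
      deriv_mul_iTrEven k V hδ₁0, deriv_mul_iTrOdd k V hδ₁0]
    abel
  have hΨ : sComm k V δ₀ δ₁ φ₀ φ₁
      = (δ₀ * Φ - (1:k) • (Φ * δ₀)) +
        ((δ₁ * φ₀ - (1:k) • (φ₀ * δ₁)) + (δ₁ * φ₁ - (-1:k) • (φ₁ * δ₁))) := by
    rw [sComm, hΦ, show ((-1:k) • (φ₁ * δ₁)) = -(φ₁ * δ₁) from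
      neg_one_smul (M := Module.End k (ExteriorAlgebra k V)) k _]
    simp only [one_smul, neg_smul, sub_neg_eq_add, mul_add, add_mul]
    abel
  refine end_ext k V fun p x hx => ?_
  by_cases hp : p ≤ Module.finrank k V
  swap
  · have hx0 : x = 0 := by
      have h' := hx
      rw [exteriorPower_eq_bot k V (by omega)] at h'
      simpa using h'
    rw [hx0, map_zero, map_zero]
  rw [iTr_apply_of_mem k V hp hx, hRHSop]
  simp only [LinearMap.add_apply, LinearMap.neg_apply, Module.End.mul_apply]
  rw [iTrEven_apply, iTrOdd_apply, iTrEven_apply, iTrOdd_apply]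
  simp only [← map_neg, ← map_add]
  congr 1
  rw [hΨ]
  rw [mul_add (LinearMap.mulLeft k x), mul_add (LinearMap.mulLeft k x)]
  rw [mul_add ((eps k V).toLinearMap), mul_add ((eps k V).toLinearMap)]
  rw [map_add (LinearMap.trace k (ExteriorAlgebra k V)),
    map_add (LinearMap.trace k (ExteriorAlgebra k V))]
  rw [mul_add ((-1:k)^p), mul_add ((-1:k)^p)]
  rw [key_even k V hδ₀ hx, key_odd k V hδ₁ hφ0p (Or.inl ⟨Even.zero, rfl⟩) hx,
    key_odd k V hδ₁ hφ1p (Or.inr ⟨by simp, rfl⟩) hx]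
  simp only [← Finset.sum_neg_distrib, ← Finset.sum_add_distrib]
  refine Finset.sum_congr rfl fun n _ => ?_
  have hT1 : LinearMap.trace k (ExteriorAlgebra k V)
        ((eps k V).toLinearMap * (LinearMap.mulLeft k (prEnd k V n (δ₁ x)) * Φ))
      = LinearMap.trace k (ExteriorAlgebra k V)
        ((eps k V).toLinearMap * (LinearMap.mulLeft k (prEnd k V n (δ₁ x)) * φ₀))
      + LinearMap.trace k (ExteriorAlgebra k V)
        ((eps k V).toLinearMap * (LinearMap.mulLeft k (prEnd k V n (δ₁ x)) * φ₁)) := by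
    rw [hΦ, mul_add, mul_add, map_add]
  by_cases h : Even n
  · rw [if_pos h, if_pos h, if_neg (by simp [h]), if_neg (by simp [h]),
      Even.neg_one_pow h, hT1]
    ring
  · rw [if_neg h, if_neg h, if_pos h, if_pos h,
      Odd.neg_one_pow (Nat.odd_iff.mpr (Nat.not_even_iff.mp h)), hT1]
    ring
end

section
/- Let k be a commutative ring and V a free k-module of finite rank r. Every k-linear superderivation δ of the exterior algebra ⋀V is of degree greater than or equal to −1; that is, δ(⋀^pV) ⊆ ⊕_{q ≥ p−1} ⋀^qV for every p ≥ 0 (equivalently, all homogeneous components of δ of degree ≤ −2 vanish). In particular δ(1) = 0, i.e., δ vanishes on ⋀^0V = k. -/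
open ExteriorAlgebra

variable (k : Type*) [CommRing k] (V : Type*) [AddCommGroup V] [Module k V]

section Aux

variable {k V}

/-- target submodule -/
private noncomputable def Sdeg (p : ℕ) : Submodule k (ExteriorAlgebra k V) :=
  ⨆ q ∈ {q : ℕ | p ≤ q + 1}, ⋀[k]^q V

private lemma mem_Sdeg {p q : ℕ} (h : p ≤ q + 1) {x : ExteriorAlgebra k V}
    (hx : x ∈ ⋀[k]^q V) : x ∈ Sdeg (k := k) (V := V) p :=
  (le_iSup₂ (f := fun q (_ : q ∈ {q : ℕ | p ≤ q + 1}) => (⋀[k]^q V : Submodule k (ExteriorAlgebra k V))) q h) hx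

private lemma mem_top_iSup (x : ExteriorAlgebra k V) :
    x ∈ ⨆ j : ℕ, (⋀[k]^j V : Submodule k (ExteriorAlgebra k V)) := by
  have h := (DirectSum.Decomposition.isInternal
    (fun i : ℕ => (⋀[k]^i V : Submodule k (ExteriorAlgebra k V)))).submodule_iSup_eq_top
  rw [h]; trivial

private lemma mul_mem_pow {i j : ℕ} {a b : ExteriorAlgebra k V}
    (ha : a ∈ ⋀[k]^i V) (hb : b ∈ ⋀[k]^j V) : a * b ∈ ⋀[k]^(i + j) V := by
  rw [exteriorPower, pow_add]
  exact Submodule.mul_mem_mul ha hb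

private lemma ι_mem_pow_one (v : V) : ExteriorAlgebra.ι k v ∈ ⋀[k]^1 V := by
  rw [exteriorPower, pow_one]
  exact LinearMap.mem_range_self _ v

private lemma key (δ : Module.End k (ExteriorAlgebra k V)) (h1 : δ 1 = 0)
    (hL : ∀ (v : V) (y : ExteriorAlgebra k V),
      δ (ExteriorAlgebra.ι k v * y) = δ (ExteriorAlgebra.ι k v) * y + ExteriorAlgebra.ι k v * δ y ∨
      δ (ExteriorAlgebra.ι k v * y) = δ (ExteriorAlgebra.ι k v) * y - ExteriorAlgebra.ι k v * δ y) :
    ∀ p : ℕ, ∀ x ∈ ⋀[k]^p V, δ x ∈ Sdeg (k := k) (V := V) p := by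
  intro p x hx
  induction hx using Submodule.pow_induction_on_left' with
  | algebraMap r =>
      rw [Algebra.algebraMap_eq_smul_one, map_smul, h1, smul_zero]
      exact Submodule.zero_mem _
  | add x y i hx hy ihx ihy =>
      rw [map_add]; exact Submodule.add_mem _ ihx ihy
  | mem_mul m hm i x hx ih =>
      obtain ⟨v, rfl⟩ := hm
      have hterm1 : δ (ExteriorAlgebra.ι k v) * x ∈ Sdeg (k := k) (V := V) (i + 1) := by
        have hle : (⨆ j : ℕ, (⋀[k]^j V : Submodule k (ExteriorAlgebra k V))) ≤
            Submodule.comap (LinearMap.mulRight k x) (Sdeg (k := k) (V := V) (i + 1)) := by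
          refine iSup_le fun j a ha => ?_
          exact mem_Sdeg (by omega) (mul_mem_pow ha hx)
        exact hle (mem_top_iSup _)
      have hterm2 : ExteriorAlgebra.ι k v * δ x ∈ Sdeg (k := k) (V := V) (i + 1) := by
        have hle : Sdeg (k := k) (V := V) i ≤
            Submodule.comap (LinearMap.mulLeft k (ExteriorAlgebra.ι k v))
              (Sdeg (k := k) (V := V) (i + 1)) := by
          refine iSup₂_le fun q hq b hb => ?_
          exact mem_Sdeg (by simp only [Set.mem_setOf_eq] at hq; omega) (mul_mem_pow (ι_mem_pow_one v) hb)
        exact hle ih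
      rcases hL v x with h | h
      · rw [h]; exact Submodule.add_mem _ hterm1 hterm2
      · rw [h]; exact Submodule.sub_mem _ hterm1 hterm2

end Aux

/-- Every `k`-linear superderivation `δ` of `⋀ V` has degree `≥ −1`:
`δ (⋀ᵖ V) ⊆ ⨆_{q ≥ p − 1} ⋀^q V` for every `p`, and in particular `δ 1 = 0`. -/
theorem superderivation_degree_ge_neg_one
    [Module.Free k V] [Module.Finite k V] (r : ℕ) (hr : Module.finrank k V = r)
    (δ : Module.End k (ExteriorAlgebra k V))
    (hδ : ∃ δ₀ δ₁, δ = δ₀ + δ₁ ∧ IsEvenDeriv k V δ₀ ∧ IsOddDeriv k V δ₁) :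
    (∀ p : ℕ, ∀ x ∈ ⋀[k]^p V, δ x ∈ ⨆ q ∈ {q : ℕ | p ≤ q + 1}, ⋀[k]^q V) ∧
      δ 1 = 0 := by
  obtain ⟨δ₀, δ₁, rfl, hδ₀, hδ₁⟩ := hδ
  have one_mem0 : (1 : ExteriorAlgebra k V) ∈ ⋀[k]^0 V := by
    rw [exteriorPower, pow_zero]; exact Submodule.mem_one.mpr ⟨1, map_one _⟩
  have one_even : (1 : ExteriorAlgebra k V) ∈ evenSub k V := by
    refine (le_iSup (fun n : ℕ => (⋀[k]^(2 * n) V : Submodule k (ExteriorAlgebra k V))) 0) ?_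
    simpa using one_mem0
  have h0 : δ₀ 1 = 0 := by
    have := hδ₀.2 1 1
    simp only [one_mul, mul_one] at this
    exact (add_left_cancel (a := δ₀ (1 : ExteriorAlgebra k V)) (by rw [add_zero]; exact this)).symm
  have h1 : δ₁ 1 = 0 := by
    have := hδ₁.2.1 1 one_even 1
    simp only [one_mul, mul_one] at this
    exact (add_left_cancel (a := δ₁ (1 : ExteriorAlgebra k V)) (by rw [add_zero]; exact this)).symm
  have hδ1 : (δ₀ + δ₁) (1 : ExteriorAlgebra k V) = 0 := by
    simp [h0, h1]
  have ι_odd : ∀ v : V, ExteriorAlgebra.ι k v ∈ oddSub k V := by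
    intro v
    refine (le_iSup (fun n : ℕ => (⋀[k]^(2 * n + 1) V : Submodule k (ExteriorAlgebra k V))) 0) ?_
    simpa using ι_mem_pow_one v
  refine ⟨fun p x hx => ?_, hδ1⟩
  have k0 := key δ₀ h0 (fun v y => Or.inl (hδ₀.2 _ _)) p x hx
  have k1 := key δ₁ h1 (fun v y => Or.inr (hδ₁.2.2 _ (ι_odd v) y)) p x hx
  have : (δ₀ + δ₁) x = δ₀ x + δ₁ x := rfl
  rw [this]
  exact Submodule.add_mem _ k0 k1
end
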